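/- There is a universal constant C > 0 with the following property. Let d be an even positive integer, let δ ≤ d/4, let a and L be positive integers with d = aL and 1 ≤ a < δ, let m_1,…,m_K ∈ ℂ^d be masks whose nonzero entries all lie in positions {1,…,δ} with ‖m‖_∞ := max_{1≤k≤K} ‖m_k‖_∞ > 0, and let 0 < p ≤ q. Suppose A : ℝ^{K×L} → ℂ^d satisfies d₁(A(y), A(y′)) ≤ C_A‖y − y′‖₂ for all y, y′ ∈ ℝ^{K×L} and A(Y(x)) ∼ x for every x ∈ C_{p,q}. Then C_A ≥ C·q·d·√a / (p·√K·‖m‖_∞²·δ^{5/2}). -/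

import Mathlib

open scoped BigOperators

noncomputable section

/-- Map an integer to `Fin d` by reduction mod `d` (requires `0 < d`). -/
def intToFin (d : ℕ) (hd : 0 < d) (z : ℤ) : Fin d :=
  ⟨(z % (d : ℤ)).toNat, by
    have h1 : 0 ≤ z % (d : ℤ) := Int.emod_nonneg z (by exact_mod_cast hd.ne')
    have h2 : z % (d : ℤ) < (d : ℤ) := Int.emod_lt_of_pos z (by exact_mod_cast hd)
    omega⟩

/-- Circular shift: `(S_ℓ x)(n) = x(((n + ℓ - 1) mod d) + 1)` in 1-based indexing. -/
def shift {d : ℕ} (ℓ : ℤ) (x : Fin d → ℂ) : Fin d → ℂ :=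
  fun i => x (intToFin d i.pos ((i : ℤ) + ℓ))

/-- `⟨u,v⟩ = ∑ u(n) conj(v(n))`. -/
def innerC {d : ℕ} (u v : Fin d → ℂ) : ℂ := ∑ n, u n * (starRingEnd ℂ) (v n)

/-- `x ∼ x'` iff `x = e^{iθ} x'` for some real `θ`. -/
def phaseEquiv {d : ℕ} (x x' : Fin d → ℂ) : Prop :=
  ∃ θ : ℝ, x = fun n => Complex.exp (θ * Complex.I) * x' n

/-- Euclidean norm on `ℂ^d`. -/
def norm2 {d : ℕ} (x : Fin d → ℂ) : ℝ := Real.sqrt (∑ n, ‖x n‖ ^ 2)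

/-- `D₂(x,x') = min_θ ‖x - e^{iθ} x'‖₂`. -/
def D2 {d : ℕ} (x x' : Fin d → ℂ) : ℝ :=
  ⨅ θ : ℝ, norm2 (fun n => x n - Complex.exp (θ * Complex.I) * x' n)

/-- `C_{p,q} = {x : p ≤ |x(n)| ≤ q for all n}`. -/
def Cpq (d : ℕ) (p q : ℝ) : Set (Fin d → ℂ) :=
  {x | ∀ n, p ≤ ‖x n‖ ∧ ‖x n‖ ≤ q}

/-- `‖m‖_∞ = max_k ‖m_k‖_∞`. -/
def maskSup {d K : ℕ} (m : Fin K → Fin d → ℂ) : ℝ :=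
  ⨆ k, ⨆ n, ‖m k n‖

/-- The measurement map `Z(x)_{k,ℓ} = |⟨S_{ℓa} m_k, x⟩|`, `1 ≤ k ≤ K`, `1 ≤ ℓ ≤ L`. -/
def Zmap {d K : ℕ} (L : ℕ) (m : Fin K → Fin d → ℂ) (a : ℕ) (x : Fin d → ℂ) :
    EuclideanSpace ℝ (Fin K × Fin L) :=
  WithLp.toLp 2 fun kl => ‖innerC (shift ((((kl.2 : ℕ) + 1) * a : ℕ) : ℤ) (m kl.1)) x‖

/-- The measurement map `Y(x)_{k,ℓ} = |⟨S_{ℓa} m_k, x⟩|²`. -/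
def Ymap {d K : ℕ} (L : ℕ) (m : Fin K → Fin d → ℂ) (a : ℕ) (x : Fin d → ℂ) :
    EuclideanSpace ℝ (Fin K × Fin L) :=
  WithLp.toLp 2 fun kl => ‖innerC (shift ((((kl.2 : ℕ) + 1) * a : ℕ) : ℤ) (m kl.1)) x‖ ^ 2

/-- The vectors `x^{±}` (sign `ε = ±1`): `q` on positions `1,…,d/2-δ`, `p` on
`d/2-δ+1,…,d/2`, `±q` on `d/2+1,…,d-δ`, and `p` on `d-δ+1,…,d`. -/
def xpm (d δ : ℕ) (p q ε : ℝ) : Fin d → ℂ :=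
  fun i => if (i : ℕ) < d / 2 - δ then (q : ℂ)
    else if (i : ℕ) < d / 2 then (p : ℂ)
    else if (i : ℕ) < d - δ then ((ε * q : ℝ) : ℂ)
    else (p : ℂ)

/-- The difference of outer products `x x^* - x' x'^*`. -/
def outerDiff {d : ℕ} (x x' : Fin d → ℂ) : Matrix (Fin d) (Fin d) ℂ :=
  Matrix.of fun i j => x i * star (x j) - x' i * star (x' j)

lemma outerDiff_isHermitian {d : ℕ} (x x' : Fin d → ℂ) :
    (outerDiff x x').IsHermitian := by
  unfold Matrix.IsHermitian
  ext i j
  simp [outerDiff, Matrix.conjTranspose_apply, star_sub, star_mul, star_star, mul_comm]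

/-- `d₁(x,x') = ‖x x^* - x' x'^*‖₁`, the sum of the singular values (for a Hermitian
matrix, the sum of the absolute values of its eigenvalues). -/
def d1 {d : ℕ} (x x' : Fin d → ℂ) : ℝ :=
  ∑ i, |(outerDiff_isHermitian x x').eigenvalues i|


/-! ### Auxiliary lemmas -/

theorem sq_abs_sub' (u v : ℂ) :
    |‖u‖ ^ 2 - ‖v‖ ^ 2| ≤ ‖u - v‖ * ‖u + v‖ := by
  have h1 : ‖u‖ ^ 2 - ‖v‖ ^ 2 = ((u - v) * (starRingEnd ℂ) (u + v)).re := by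
    simp only [Complex.sq_norm, Complex.normSq_apply, Complex.mul_re, Complex.sub_re,
      Complex.sub_im, Complex.conj_re, Complex.conj_im, Complex.add_re, Complex.add_im]
    ring
  rw [h1]
  calc |((u - v) * (starRingEnd ℂ) (u + v)).re|
      ≤ ‖(u - v) * (starRingEnd ℂ) (u + v)‖ := Complex.abs_re_le_norm _
    _ = ‖u - v‖ * ‖u + v‖ := by rw [norm_mul, Complex.norm_conj]

theorem sum_abs_eigen_congr' {d : ℕ} {M N : Matrix (Fin d) (Fin d) ℂ}
    (hM : M.IsHermitian) (hN : N.IsHermitian) (h : M = N) :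
    ∑ i, |hM.eigenvalues i| = ∑ i, |hN.eigenvalues i| := by subst h; rfl

theorem d1_congr' {d : ℕ} {x x' y y' : Fin d → ℂ} (h : outerDiff x x' = outerDiff y y') :
    d1 x x' = d1 y y' :=
  sum_abs_eigen_congr' (outerDiff_isHermitian x x') (outerDiff_isHermitian y y') h

open Matrix in
theorem quad_bound' {d : ℕ} {M : Matrix (Fin d) (Fin d) ℂ} (hM : M.IsHermitian) (v : Fin d → ℂ) :
    |(star v ⬝ᵥ (M *ᵥ v)).re| ≤ (∑ i, |hM.eigenvalues i|) * ∑ i, Complex.normSq (v i) := by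
  classical
  set U : Matrix (Fin d) (Fin d) ℂ := (hM.eigenvectorUnitary : Matrix (Fin d) (Fin d) ℂ) with hU
  set w : Fin d → ℂ := star U *ᵥ v with hw
  have hstar : star w = star v ᵥ* U := by
    rw [hw, star_mulVec]
    show star v ᵥ* star (star U) = _
    rw [star_star]
  have hquad : star v ⬝ᵥ (M *ᵥ v) = ∑ i, (hM.eigenvalues i : ℂ) * Complex.normSq (w i) := by
    conv_lhs => rw [hM.spectral_theorem, Unitary.conjStarAlgAut_apply]
    rw [← mulVec_mulVec, ← mulVec_mulVec, dotProduct_mulVec, ← hstar, ← hU, ← hw,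
      dotProduct, Finset.sum_congr rfl]
    intro i _
    rw [Pi.star_apply, mulVec_diagonal]
    simp only [Function.comp_apply, Complex.normSq_eq_conj_mul_self, Complex.star_def,
      RCLike.ofReal_alg, Complex.real_smul, mul_one]
    ring
  have hnorm : ∑ i, Complex.normSq (w i) = ∑ i, Complex.normSq (v i) := by
    have h1 : star w ⬝ᵥ w = star v ⬝ᵥ v := by
      rw [hstar, hw, ← dotProduct_mulVec, mulVec_mulVec,
        (Matrix.mem_unitaryGroup_iff).mp hM.eigenvectorUnitary.2, one_mulVec]
    have h2 : ∀ u : Fin d → ℂ, star u ⬝ᵥ u = ((∑ i, Complex.normSq (u i) : ℝ) : ℂ) := by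
      intro u
      rw [dotProduct]
      push_cast
      exact Finset.sum_congr rfl fun i _ => by
        rw [Pi.star_apply, Complex.normSq_eq_conj_mul_self, Complex.star_def]
    have := h1
    rw [h2 w, h2 v] at this
    exact_mod_cast this
  rw [hquad]
  have hre : (∑ i, (hM.eigenvalues i : ℂ) * Complex.normSq (w i)).re
      = ∑ i, hM.eigenvalues i * Complex.normSq (w i) := by
    rw [Complex.re_sum]
    exact Finset.sum_congr rfl fun i _ => by
      rw [← Complex.ofReal_mul, Complex.ofReal_re]
  rw [hre]
  calc |∑ i, hM.eigenvalues i * Complex.normSq (w i)|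
      ≤ ∑ i, |hM.eigenvalues i * Complex.normSq (w i)| := Finset.abs_sum_le_sum_abs _ _
    _ ≤ ∑ i, |hM.eigenvalues i| * ∑ j, Complex.normSq (v j) := by
        apply Finset.sum_le_sum
        intro i _
        rw [abs_mul]
        apply mul_le_mul_of_nonneg_left _ (abs_nonneg _)
        rw [abs_of_nonneg (Complex.normSq_nonneg _), ← hnorm]
        exact Finset.single_le_sum (fun j _ => Complex.normSq_nonneg _) (Finset.mem_univ i)
    _ = (∑ i, |hM.eigenvalues i|) * ∑ i, Complex.normSq (v i) := by rw [← Finset.sum_mul]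

open Matrix in
theorem quad_outerDiff' {d : ℕ} (x x' v : Fin d → ℂ) :
    star v ⬝ᵥ ((outerDiff x x') *ᵥ v)
      = ((Complex.normSq (innerC v x) - Complex.normSq (innerC v x') : ℝ) : ℂ) := by
  have key : ∀ y z : Fin d → ℂ,
      star z ⬝ᵥ ((Matrix.of fun i j => y i * star (y j) : Matrix (Fin d) (Fin d) ℂ) *ᵥ z)
        = (Complex.normSq (innerC z y) : ℂ) := by
    intro y z
    have hin : innerC z y = ∑ j, star (y j) * z j := by
      unfold innerC
      exact Finset.sum_congr rfl fun j _ => by rw [Complex.star_def]; ring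
    have hmv : (Matrix.of fun i j => y i * star (y j) : Matrix (Fin d) (Fin d) ℂ) *ᵥ z
        = fun i => y i * ∑ j, star (y j) * z j := by
      funext i'
      rw [mulVec, dotProduct, Finset.mul_sum]
      exact Finset.sum_congr rfl fun j _ => by simp only [Matrix.of_apply]; ring
    rw [Complex.normSq_eq_conj_mul_self, hin, hmv, dotProduct]
    rw [show (∑ i, star z i * (y i * ∑ j, star (y j) * z j))
        = (∑ i, star z i * y i) * ∑ j, star (y j) * z j by
      rw [Finset.sum_mul]; exact Finset.sum_congr rfl fun i _ => by ring]
    congr 1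
    rw [_root_.map_sum]
    exact Finset.sum_congr rfl fun i _ => by
      simp only [Pi.star_apply, Complex.star_def, _root_.map_mul, Complex.conj_conj]
      ring
  have expand : (outerDiff x x') *ᵥ v
      = ((Matrix.of fun i j => x i * star (x j) : Matrix (Fin d) (Fin d) ℂ) *ᵥ v)
        - ((Matrix.of fun i j => x' i * star (x' j) : Matrix (Fin d) (Fin d) ℂ) *ᵥ v) := by
    rw [← Matrix.sub_mulVec]
    rfl
  rw [expand, dotProduct_sub, key x v, key x' v]
  push_cast
  ring

theorem d1_lower' {d : ℕ} (x x' v : Fin d → ℂ) :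
    Complex.normSq (innerC v x) - Complex.normSq (innerC v x')
      ≤ d1 x x' * ∑ i, Complex.normSq (v i) := by
  have h := quad_bound' (outerDiff_isHermitian x x') v
  rw [quad_outerDiff', Complex.ofReal_re] at h
  calc Complex.normSq (innerC v x) - Complex.normSq (innerC v x')
      ≤ |Complex.normSq (innerC v x) - Complex.normSq (innerC v x')| := le_abs_self _
    _ ≤ _ := h

theorem sum_piecewise' (f : ℕ → ℝ) (A B C d : ℕ) (hAB : A ≤ B) (hBC : B ≤ C)
    (hCd : C ≤ d) (c1 c2 c3 c4 : ℝ)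
    (h1 : ∀ n, n < A → f n = c1) (h2 : ∀ n, A ≤ n → n < B → f n = c2)
    (h3 : ∀ n, B ≤ n → n < C → f n = c3) (h4 : ∀ n, C ≤ n → n < d → f n = c4) :
    ∑ n ∈ Finset.range d, f n
      = A * c1 + (B - A : ℕ) * c2 + (C - B : ℕ) * c3 + (d - C : ℕ) * c4 := by
  rw [Finset.range_eq_Ico,
    ← Finset.sum_Ico_consecutive _ (Nat.zero_le A) (hAB.trans (hBC.trans hCd)),
    ← Finset.sum_Ico_consecutive _ hAB (hBC.trans hCd), ← Finset.sum_Ico_consecutive _ hBC hCd]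
  have e1 : ∑ n ∈ Finset.Ico 0 A, f n = A * c1 := by
    rw [Finset.sum_congr rfl (fun n hn => h1 n (Finset.mem_Ico.mp hn).2), Finset.sum_const,
      Nat.card_Ico, nsmul_eq_mul]; norm_num
  have e2 : ∑ n ∈ Finset.Ico A B, f n = (B - A : ℕ) * c2 := by
    rw [Finset.sum_congr rfl (fun n hn => h2 n (Finset.mem_Ico.mp hn).1 (Finset.mem_Ico.mp hn).2),
      Finset.sum_const, Nat.card_Ico, nsmul_eq_mul]
  have e3 : ∑ n ∈ Finset.Ico B C, f n = (C - B : ℕ) * c3 := by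
    rw [Finset.sum_congr rfl (fun n hn => h3 n (Finset.mem_Ico.mp hn).1 (Finset.mem_Ico.mp hn).2),
      Finset.sum_const, Nat.card_Ico, nsmul_eq_mul]
  have e4 : ∑ n ∈ Finset.Ico C d, f n = (d - C : ℕ) * c4 := by
    rw [Finset.sum_congr rfl (fun n hn => h4 n (Finset.mem_Ico.mp hn).1 (Finset.mem_Ico.mp hn).2),
      Finset.sum_const, Nat.card_Ico, nsmul_eq_mul]
  rw [e1, e2, e3, e4]; ring

theorem intToFin_coe' {d : ℕ} (hd : 0 < d) (z : ℤ) :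
    ((intToFin d hd z : Fin d) : ℤ) = z % (d : ℤ) := by
  simp only [intToFin]
  have h1 : 0 ≤ z % (d : ℤ) := Int.emod_nonneg z (by exact_mod_cast hd.ne')
  omega

theorem intToFin_congr' {d : ℕ} (hd : 0 < d) {z z' : ℤ} (h : z % (d : ℤ) = z' % (d : ℤ)) :
    intToFin d hd z = intToFin d hd z' := by
  apply Fin.ext
  simp only [intToFin, h]

theorem intToFin_coe_nat' {d : ℕ} (hd : 0 < d) (n : ℕ) :
    ((intToFin d hd (n : ℤ) : Fin d) : ℕ) = n % d := by
  have := intToFin_coe' hd (n : ℤ)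
  have h2 : ((n : ℤ)) % (d : ℤ) = ((n % d : ℕ) : ℤ) := by push_cast; rfl
  omega

theorem intToFin_self' {d : ℕ} (hd : 0 < d) (i : Fin d) : intToFin d hd (i : ℤ) = i := by
  apply Fin.ext
  have := intToFin_coe_nat' hd (i : ℕ)
  simpa [Nat.mod_eq_of_lt i.isLt] using this

theorem intToFin_add_cancel' {d : ℕ} (hd : 0 < d) (z s : ℤ) :
    intToFin d hd ((intToFin d hd z : ℤ) + s) = intToFin d hd (z + s) := by
  apply intToFin_congr'
  rw [intToFin_coe']
  conv_rhs => rw [Int.add_emod]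
  rw [Int.add_emod (z % d) s, Int.emod_emod_of_dvd z dvd_rfl]

theorem intToFin_sub_cancel' {d : ℕ} (hd : 0 < d) (z s : ℤ) :
    intToFin d hd ((intToFin d hd z : ℤ) - s) = intToFin d hd (z - s) := by
  rw [sub_eq_add_neg, intToFin_add_cancel', ← sub_eq_add_neg]

theorem innerC_shift' {d : ℕ} (hd : 0 < d) (m x : Fin d → ℂ) (s : ℤ) :
    innerC (shift s m) x = ∑ j, m j * (starRingEnd ℂ) (x (intToFin d hd ((j : ℤ) - s))) := by
  unfold innerC shift
  apply Fintype.sum_bijective (fun i : Fin d => intToFin d hd ((i : ℤ) + s))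
  · constructor
    · intro j j' h
      have := congrArg (fun i : Fin d => intToFin d hd ((i : ℤ) - s)) h
      simpa [intToFin_sub_cancel', add_sub_cancel_right, intToFin_self'] using this
    · intro i
      refine ⟨intToFin d hd ((i : ℤ) - s), ?_⟩
      simp [intToFin_add_cancel', intToFin_self']
  · intro i
    have h1 : intToFin d hd ((intToFin d hd ((i : ℤ) + s) : ℤ) - s) = i := by
      rw [intToFin_sub_cancel', add_sub_cancel_right, intToFin_self']
    have h2 : intToFin d i.pos ((i : ℤ) + s) = intToFin d hd ((i : ℤ) + s) := rfl
    rw [h2, h1]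

/-- Real version of `xpm`. -/
def xpmR (d δ : ℕ) (p q ε : ℝ) (n : ℕ) : ℝ :=
  if n < d / 2 - δ then q else if n < d / 2 then p else if n < d - δ then ε * q else p

theorem xpm_eq' (d δ : ℕ) (p q ε : ℝ) (i : Fin d) :
    xpm d δ p q ε i = ((xpmR d δ p q ε (i : ℕ) : ℝ) : ℂ) := by
  unfold xpm xpmR
  split_ifs <;> rfl

theorem xpmR_abs_le' {d δ : ℕ} {p q ε : ℝ} (hp : 0 < p) (hpq : p ≤ q) (hε : |ε| = 1) (n : ℕ) :
    |xpmR d δ p q ε n| ≤ q := by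
  unfold xpmR
  have h1 : |ε * q| = q := by rw [abs_mul, hε, one_mul, abs_of_nonneg (hp.le.trans hpq)]
  have h2 : |q| = q := abs_of_nonneg (hp.le.trans hpq)
  have h3 : |p| = p := abs_of_nonneg hp.le
  split_ifs <;> simp [h1, h2, h3, hpq, le_refl]

theorem xpmR_between' {d δ : ℕ} {p q ε : ℝ} (hp : 0 < p) (hpq : p ≤ q) (hε : |ε| = 1) (n : ℕ) :
    p ≤ |xpmR d δ p q ε n| ∧ |xpmR d δ p q ε n| ≤ q := by
  have h1 : |ε * q| = q := by rw [abs_mul, hε, one_mul, abs_of_nonneg (hp.le.trans hpq)]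
  have h2 : |q| = q := abs_of_nonneg (hp.le.trans hpq)
  have h3 : |p| = p := abs_of_nonneg hp.le
  unfold xpmR
  split_ifs <;> simp [h1, h2, h3, hpq, le_refl]

theorem xpmR_sum_le' {d δ : ℕ} {p q : ℝ} (hp : 0 < p) (hpq : p ≤ q) (n : ℕ)
    (hn : d / 2 - δ ≤ n) :
    |xpmR d δ p q 1 n + xpmR d δ p q (-1) n| ≤ 2 * p := by
  unfold xpmR
  split_ifs with h1 h2 h3
  · exfalso; omega
  · rw [abs_of_nonneg (by linarith)]; linarith
  · rw [show (1:ℝ) * q + (-1) * q = 0 by ring, abs_zero]; linarith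
  · rw [abs_of_nonneg (by linarith)]; linarith

theorem xpmR_diff_zero' {d δ : ℕ} (p q : ℝ) (n : ℕ) (hn : n < d / 2 ∨ d - δ ≤ n) :
    xpmR d δ p q 1 n = xpmR d δ p q (-1) n := by
  unfold xpmR
  split_ifs <;> first | rfl | (exfalso; omega)

theorem xpmR_neg_flip' {d δ : ℕ} (p q : ℝ) (n : ℕ)
    (hn : d / 2 ≤ n) (hn2 : n < d - δ) :
    xpmR d δ p q 1 n = -xpmR d δ p q (-1) n := by
  unfold xpmR
  split_ifs <;> first | (exfalso; omega) | ring

theorem xpmR_diff_le' {d δ : ℕ} {p q : ℝ} (hp : 0 < p) (hpq : p ≤ q) (n : ℕ) :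
    |xpmR d δ p q 1 n - xpmR d δ p q (-1) n| ≤ 2 * q := by
  have h1 := xpmR_abs_le' (d := d) (δ := δ) hp hpq (ε := 1) (by norm_num) n
  have h2 := xpmR_abs_le' (d := d) (δ := δ) hp hpq (ε := -1) (by norm_num) n
  calc |xpmR d δ p q 1 n - xpmR d δ p q (-1) n|
      ≤ |xpmR d δ p q 1 n| + |xpmR d δ p q (-1) n| := abs_sub _ _
    _ ≤ 2 * q := by linarith

theorem innerC_xpm' (d δ : ℕ) (p q ε ε' : ℝ) :
    innerC (xpm d δ p q ε) (xpm d δ p q ε')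
      = ((∑ n ∈ Finset.range d, xpmR d δ p q ε n * xpmR d δ p q ε' n : ℝ) : ℂ) := by
  unfold innerC
  rw [← Fin.sum_univ_eq_sum_range (fun n => xpmR d δ p q ε n * xpmR d δ p q ε' n) d]
  push_cast
  exact Finset.sum_congr rfl fun i _ => by
    rw [xpm_eq', xpm_eq', Complex.conj_ofReal]

/-! ### Measurement entry analysis -/

def tval (d : ℕ) (s : ℕ) : ℕ := (d - s % d) % d

theorem tval_lt {d : ℕ} (hd : 0 < d) (s : ℕ) : tval d s < d := Nat.mod_lt _ hd

theorem tval_add_mod {d : ℕ} (hd : 0 < d) (s : ℕ) : (tval d s + s) % d = 0 := by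
  unfold tval
  rcases Nat.eq_zero_or_pos (s % d) with h | h
  · rw [h, Nat.sub_zero, Nat.mod_self, Nat.zero_add, h]
  · have hr : s % d < d := Nat.mod_lt _ hd
    rw [Nat.mod_eq_of_lt (by omega : d - s % d < d), Nat.add_mod,
      show (d - s % d) % d = d - s % d from Nat.mod_eq_of_lt (by omega),
      show d - s % d + s % d = d by omega, Nat.mod_self]

theorem idx_coe {d : ℕ} (hd : 0 < d) (s : ℕ) (j : Fin d) :
    ((intToFin d hd ((j : ℤ) - (s : ℤ)) : Fin d) : ℕ) = ((j : ℕ) + tval d s) % d := by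
  have key : ((j : ℤ) - (s : ℤ)) % (d : ℤ) = (((j : ℕ) + tval d s : ℕ) : ℤ) % (d : ℤ) := by
    have h0 : ((tval d s + s) % d : ℕ) = 0 := tval_add_mod hd s
    obtain ⟨c, hc⟩ := Nat.dvd_of_mod_eq_zero h0
    have hcast : ((tval d s : ℕ) : ℤ) + (s : ℤ) = (d : ℤ) * c := by exact_mod_cast hc
    have hdvd : (d : ℤ) ∣ ((((j : ℕ) + tval d s : ℕ) : ℤ) - ((j : ℤ) - (s : ℤ))) := by
      refine ⟨c, ?_⟩
      push_cast
      linear_combination hcast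
    have hmod := Int.modEq_iff_dvd.mpr hdvd
    unfold Int.ModEq at hmod
    exact hmod
  rw [intToFin_congr' hd key, intToFin_coe_nat']

theorem map_conj_ofReal_abs (r : ℝ) : ‖(starRingEnd ℂ) ((r : ℝ) : ℂ)‖ = |r| := by
  rw [Complex.norm_conj, Complex.norm_real, Real.norm_eq_abs]

theorem abs_sum_le_count {d δ : ℕ} (hδd : δ ≤ d) (f : Fin d → ℂ) (c : ℝ)
    (h : ∀ j : Fin d, ‖f j‖ ≤ if (j : ℕ) < δ then c else 0) :
    ‖∑ j, f j‖ ≤ δ * c := by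
  calc ‖∑ j, f j‖ ≤ ∑ j, ‖f j‖ := norm_sum_le _ _
    _ ≤ ∑ j : Fin d, (if (j : ℕ) < δ then c else 0) := Finset.sum_le_sum (fun j _ => h j)
    _ = δ * c := by
        rw [Fin.sum_univ_eq_sum_range (fun n => if n < δ then c else 0) d, Finset.sum_ite,
          Finset.sum_const, Finset.sum_const, smul_zero, add_zero,
          show (Finset.range d).filter (fun n => n < δ) = Finset.range δ by
            ext n; simp [Finset.mem_filter, Finset.mem_range]; omega,
          Finset.card_range, nsmul_eq_mul]

theorem entry_bound {d δ aa K L : ℕ} (hd : 0 < d) (hd2 : d % 2 = 0) (hδd : 4 * δ ≤ d)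
    (m : Fin K → Fin d → ℂ) (hsupp : ∀ k n, m k n ≠ 0 → (n : ℕ) < δ)
    (M : ℝ) (hM : ∀ k n, ‖m k n‖ ≤ M) {p q : ℝ} (hp : 0 < p) (hpq : p ≤ q)
    (k : Fin K) (ℓ2 : Fin L) :
    |Ymap L m aa (xpm d δ p q 1) (k, ℓ2) - Ymap L m aa (xpm d δ p q (-1)) (k, ℓ2)|
      ≤ if (d/2 - δ < tval d (((ℓ2 : ℕ)+1)*aa) ∧ tval d (((ℓ2 : ℕ)+1)*aa) < d/2) ∨
          (d - 2*δ < tval d (((ℓ2 : ℕ)+1)*aa) ∧ tval d (((ℓ2 : ℕ)+1)*aa) < d - δ)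
        then 4*p*q*(δ:ℝ)^2*M^2 else 0 := by
  have hM0 : 0 ≤ M := le_trans (norm_nonneg _) (hM k ⟨0, hd⟩)
  set s : ℕ := ((ℓ2 : ℕ)+1)*aa with hs
  set t : ℕ := tval d s with ht
  have htlt : t < d := tval_lt hd s
  set x1 : Fin d → ℂ := xpm d δ p q 1 with hx1
  set x2 : Fin d → ℂ := xpm d δ p q (-1) with hx2
  set u : ℂ := innerC (shift (s : ℤ) (m k)) x1 with hu
  set v : ℂ := innerC (shift (s : ℤ) (m k)) x2 with hv
  have hY1 : Ymap L m aa x1 (k, ℓ2) = (‖u‖)^2 := rfl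
  have hY2 : Ymap L m aa x2 (k, ℓ2) = (‖v‖)^2 := rfl
  have hue : u = ∑ j, m k j * (starRingEnd ℂ) (x1 (intToFin d hd ((j : ℤ) - (s : ℤ)))) :=
    innerC_shift' hd _ _ _
  have hve : v = ∑ j, m k j * (starRingEnd ℂ) (x2 (intToFin d hd ((j : ℤ) - (s : ℤ)))) :=
    innerC_shift' hd _ _ _
  have hval : ∀ (ε : ℝ) (j : Fin d),
      xpm d δ p q ε (intToFin d hd ((j : ℤ) - (s : ℤ)))
        = ((xpmR d δ p q ε (((j : ℕ) + t) % d) : ℝ) : ℂ) := by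
    intro ε j
    rw [xpm_eq']
    congr 2
    exact idx_coe hd s j
  have hval1 : ∀ j : Fin d, x1 (intToFin d hd ((j : ℤ) - (s : ℤ)))
      = ((xpmR d δ p q 1 (((j : ℕ) + t) % d) : ℝ) : ℂ) := fun j => hval 1 j
  have hval2 : ∀ j : Fin d, x2 (intToFin d hd ((j : ℤ) - (s : ℤ)))
      = ((xpmR d δ p q (-1) (((j : ℕ) + t) % d) : ℝ) : ℂ) := fun j => hval (-1) j
  have hwrap : ∀ j : Fin d, ((j : ℕ) + t) % d = (j : ℕ) + t ∨
      (d ≤ (j : ℕ) + t ∧ ((j : ℕ) + t) % d = (j : ℕ) + t - d) := by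
    intro j
    by_cases hlt : (j : ℕ) + t < d
    · exact Or.inl (Nat.mod_eq_of_lt hlt)
    · refine Or.inr ⟨le_of_not_gt hlt, ?_⟩
      rw [Nat.mod_eq_sub_mod (le_of_not_gt hlt), Nat.mod_eq_of_lt (by omega)]
  by_cases hT : (d/2 - δ < t ∧ t < d/2) ∨ (d - 2*δ < t ∧ t < d - δ)
  · rw [if_pos hT, hY1, hY2]
    refine le_trans (sq_abs_sub' u v) ?_
    have hsub : u - v = ∑ j, m k j * (starRingEnd ℂ)
        (x1 (intToFin d hd ((j : ℤ) - (s : ℤ))) - x2 (intToFin d hd ((j : ℤ) - (s : ℤ)))) := by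
      rw [hue, hve, ← Finset.sum_sub_distrib]
      exact Finset.sum_congr rfl fun j _ => by rw [map_sub, mul_sub]
    have hadd : u + v = ∑ j, m k j * (starRingEnd ℂ)
        (x1 (intToFin d hd ((j : ℤ) - (s : ℤ))) + x2 (intToFin d hd ((j : ℤ) - (s : ℤ)))) := by
      rw [hue, hve, ← Finset.sum_add_distrib]
      exact Finset.sum_congr rfl fun j _ => by rw [map_add, mul_add]
    have h1 : ‖u - v‖ ≤ δ * (M * (2*q)) := by
      rw [hsub]
      apply abs_sum_le_count (by omega)
      intro j
      by_cases hj : (j : ℕ) < δ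
      · rw [if_pos hj, norm_mul]
        rw [hval1 j, hval2 j, ← Complex.ofReal_sub, map_conj_ofReal_abs]
        exact mul_le_mul (hM k j) (xpmR_diff_le' hp hpq _) (abs_nonneg _) hM0
      · rw [if_neg hj]
        have : m k j = 0 := by
          by_contra hne
          exact hj (hsupp k j hne)
        simp [this]
    have h2 : ‖u + v‖ ≤ δ * (M * (2*p)) := by
      rw [hadd]
      apply abs_sum_le_count (by omega)
      intro j
      by_cases hj : (j : ℕ) < δ
      · rw [if_pos hj, norm_mul]
        rw [hval1 j, hval2 j, ← Complex.ofReal_add, map_conj_ofReal_abs]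
        refine mul_le_mul (hM k j) (xpmR_sum_le' hp hpq _ ?_) (abs_nonneg _) hM0
        rcases hwrap j with hw | hw
        · omega
        · exfalso; omega
      · rw [if_neg hj]
        have : m k j = 0 := by
          by_contra hne
          exact hj (hsupp k j hne)
        simp [this]
    calc ‖u - v‖ * ‖u + v‖
        ≤ (δ * (M * (2*q))) * (δ * (M * (2*p))) := by
          exact mul_le_mul h1 h2 (norm_nonneg _)
            (mul_nonneg (Nat.cast_nonneg δ) (mul_nonneg hM0 (by linarith)))
      _ = 4*p*q*(δ:ℝ)^2*M^2 := by ring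
  · rw [if_neg hT]
    have habs : ‖u‖ = ‖v‖ := by
      have hcases : t ≤ d/2 - δ ∨ (d/2 ≤ t ∧ t ≤ d - 2*δ) ∨ d - δ ≤ t := by omega
      rcases hcases with hc | hc | hc
      · -- window inside first region: u = v
        have : u = v := by
          rw [hue, hve]
          apply Finset.sum_congr rfl
          intro j _
          by_cases hm : m k j = 0
          · simp [hm]
          · have hj : (j : ℕ) < δ := hsupp k j hm
            congr 1
            rw [hval1 j, hval2 j]
            refine congrArg (starRingEnd ℂ) (congrArg Complex.ofReal (xpmR_diff_zero' p q _ ?_))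
            rcases hwrap j with hw | hw
            · left; omega
            · left; omega
        rw [this]
      · -- window inside flip region: u = -v
        have : u = -v := by
          rw [hue, hve, ← Finset.sum_neg_distrib]
          apply Finset.sum_congr rfl
          intro j _
          by_cases hm : m k j = 0
          · simp [hm]
          · have hj : (j : ℕ) < δ := hsupp k j hm
            rw [← mul_neg]
            congr 1
            rw [hval1 j, hval2 j, ← map_neg, ← Complex.ofReal_neg]
            refine congrArg (starRingEnd ℂ) (congrArg Complex.ofReal (xpmR_neg_flip' p q _ ?_ ?_))
            · rcases hwrap j with hw | hw <;> omega
            · rcases hwrap j with hw | hw <;> omega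
        rw [this, norm_neg]
      · -- window inside last region: u = v
        have : u = v := by
          rw [hue, hve]
          apply Finset.sum_congr rfl
          intro j _
          by_cases hm : m k j = 0
          · simp [hm]
          · have hj : (j : ℕ) < δ := hsupp k j hm
            congr 1
            rw [hval1 j, hval2 j]
            refine congrArg (starRingEnd ℂ) (congrArg Complex.ofReal (xpmR_diff_zero' p q _ ?_))
            rcases hwrap j with hw | hw
            · right; omega
            · left; omega
        rw [this]
    rw [hY1, hY2, habs, sub_self, abs_zero]

/-! ### Counting lemma -/

theorem nat_div_diff_le {c δa aa : ℕ} (ha : 0 < aa) (haδ : aa ≤ δa) :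
    (((c + δa - 1) / aa - c / aa : ℕ) : ℝ) * (aa : ℝ) ≤ 2 * (δa : ℝ) := by
  have hle : c / aa ≤ (c + δa - 1) / aa := Nat.div_le_div_right (by omega)
  rw [Nat.cast_sub hle, sub_mul]
  have h1 : (((c + δa - 1) / aa : ℕ) : ℝ) * (aa : ℝ) ≤ ((c + δa - 1 : ℕ) : ℝ) := by
    exact_mod_cast Nat.div_mul_le_self (c + δa - 1) aa
  have h2n : c < c / aa * aa + aa := by
    have hdm := Nat.div_add_mod c aa
    have hml := Nat.mod_lt c ha
    rw [Nat.mul_comm aa (c / aa)] at hdm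
    omega
  have h2 : ((c : ℕ) : ℝ) < ((c / aa : ℕ) : ℝ) * (aa : ℝ) + (aa : ℝ) := by exact_mod_cast h2n
  have h3 : ((c + δa - 1 : ℕ) : ℝ) = (c : ℝ) + (δa : ℝ) - 1 := by
    rw [Nat.cast_sub (by omega : 1 ≤ c + δa)]
    push_cast
    ring
  have h4 : (aa : ℝ) ≤ (δa : ℝ) := by exact_mod_cast haδ
  rw [h3] at h1
  linarith

theorem count_bound {d δ aa L : ℕ} (hd2 : d % 2 = 0) (hδd : 4 * δ ≤ d) (ha : 0 < aa)
    (hL : 0 < L) (hdaL : d = aa * L) (haδ : aa < δ) :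
    ((Finset.univ.filter (fun ℓ2 : Fin L =>
        (d/2 - δ < tval d (((ℓ2 : ℕ)+1)*aa) ∧ tval d (((ℓ2 : ℕ)+1)*aa) < d/2) ∨
        (d - 2*δ < tval d (((ℓ2 : ℕ)+1)*aa) ∧ tval d (((ℓ2 : ℕ)+1)*aa) < d - δ))).card : ℝ)
      ≤ 4 * δ / aa := by
  classical
  set vfun : Fin L → ℕ := fun ℓ2 => (L - ((ℓ2 : ℕ)+1) % L) % L with hvfun
  have htv : ∀ ℓ2 : Fin L, tval d (((ℓ2 : ℕ)+1)*aa) = aa * vfun ℓ2 := by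
    intro ℓ2
    show (d - ((ℓ2 : ℕ)+1)*aa % d) % d = _
    rw [hdaL, Nat.mul_comm ((ℓ2 : ℕ)+1) aa, Nat.mul_mod_mul_left,
      ← Nat.mul_sub_left_distrib, Nat.mul_mod_mul_left]
  set S1 : Finset ℕ := Finset.Ioc ((d/2 - δ)/aa) ((d/2 - 1)/aa) with hS1
  set S2 : Finset ℕ := Finset.Ioc ((d - 2*δ)/aa) ((d - δ - 1)/aa) with hS2
  have hcard : (Finset.univ.filter (fun ℓ2 : Fin L =>
      (d/2 - δ < tval d (((ℓ2 : ℕ)+1)*aa) ∧ tval d (((ℓ2 : ℕ)+1)*aa) < d/2) ∨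
      (d - 2*δ < tval d (((ℓ2 : ℕ)+1)*aa) ∧ tval d (((ℓ2 : ℕ)+1)*aa) < d - δ))).card
      ≤ (S1 ∪ S2).card := by
    apply Finset.card_le_card_of_injOn vfun
    · intro ℓ2 hmem
      rw [Finset.mem_coe, Finset.mem_filter] at hmem
      have hmem := hmem.2
      rw [htv ℓ2] at hmem
      rcases hmem with ⟨hlo, hhi⟩ | ⟨hlo, hhi⟩ <;>
        rw [Nat.mul_comm aa (vfun ℓ2)] at hlo hhi
      · rw [Finset.mem_coe]; apply Finset.mem_union_left
        rw [hS1, Finset.mem_Ioc]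
        constructor
        · rw [Nat.div_lt_iff_lt_mul ha]
          omega
        · rw [Nat.le_div_iff_mul_le ha]
          omega
      · rw [Finset.mem_coe]; apply Finset.mem_union_right
        rw [hS2, Finset.mem_Ioc]
        constructor
        · rw [Nat.div_lt_iff_lt_mul ha]
          omega
        · rw [Nat.le_div_iff_mul_le ha]
          omega
    · intro ℓ hℓ ℓ' hℓ' h
      have e1 : ∀ x : Fin L, ((x : ℕ)+1) % L = (x : ℕ)+1 ∨
          ((x : ℕ)+1 = L ∧ ((x : ℕ)+1) % L = 0) := by
        intro x
        by_cases hc : (x : ℕ)+1 = L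
        · exact Or.inr ⟨hc, by rw [hc, Nat.mod_self]⟩
        · exact Or.inl (Nat.mod_eq_of_lt (by have := x.isLt; omega))
      have e2 : ∀ r : ℕ, r < L → ((L - r) % L = L - r ∧ 0 < r) ∨ (r = 0 ∧ (L - r) % L = 0) := by
        intro r hr
        rcases Nat.eq_zero_or_pos r with h0 | h0
        · exact Or.inr ⟨h0, by rw [h0, Nat.sub_zero, Nat.mod_self]⟩
        · exact Or.inl ⟨Nat.mod_eq_of_lt (by omega), h0⟩
      have hm1 : ((ℓ : ℕ)+1) % L < L := Nat.mod_lt _ hL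
      have hm2 : ((ℓ' : ℕ)+1) % L < L := Nat.mod_lt _ hL
      have h' : (L - ((ℓ : ℕ)+1) % L) % L = (L - ((ℓ' : ℕ)+1) % L) % L := h
      apply Fin.ext
      rcases e1 ℓ with ha1 | ⟨ha1, ha1'⟩ <;> rcases e1 ℓ' with hb1 | ⟨hb1, hb1'⟩ <;>
        rcases e2 _ hm1 with ⟨hc1, hc1'⟩ | ⟨hc1, hc1'⟩ <;>
        rcases e2 _ hm2 with ⟨hd1, hd1'⟩ | ⟨hd1, hd1'⟩ <;> omega
  have hc1 : ((S1.card : ℕ) : ℝ) * (aa : ℝ) ≤ 2 * (δ : ℝ) := by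
    rw [hS1, Nat.card_Ioc, show d/2 - 1 = (d/2 - δ) + δ - 1 by omega]
    exact nat_div_diff_le ha (by omega)
  have hc2 : ((S2.card : ℕ) : ℝ) * (aa : ℝ) ≤ 2 * (δ : ℝ) := by
    rw [hS2, Nat.card_Ioc, show d - δ - 1 = (d - 2*δ) + δ - 1 by omega]
    exact nat_div_diff_le ha (by omega)
  have hun : (((S1 ∪ S2).card : ℕ) : ℝ) ≤ ((S1.card : ℕ) : ℝ) + ((S2.card : ℕ) : ℝ) := by
    exact_mod_cast Finset.card_union_le S1 S2
  have haR : (0:ℝ) < (aa : ℝ) := by exact_mod_cast ha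
  rw [le_div_iff₀ haR]
  have hcardR : ((Finset.univ.filter (fun ℓ2 : Fin L =>
      (d/2 - δ < tval d (((ℓ2 : ℕ)+1)*aa) ∧ tval d (((ℓ2 : ℕ)+1)*aa) < d/2) ∨
      (d - 2*δ < tval d (((ℓ2 : ℕ)+1)*aa) ∧ tval d (((ℓ2 : ℕ)+1)*aa) < d - δ))).card : ℝ)
      ≤ (((S1 ∪ S2).card : ℕ) : ℝ) := by exact_mod_cast hcard
  nlinarith [hc1, hc2, hun, hcardR, haR]

/-! ### Sums for the test vectors -/

theorem xpmR_val1 {d δ : ℕ} (p q ε : ℝ) {n : ℕ} (h : n < d/2 - δ) : xpmR d δ p q ε n = q := by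
  unfold xpmR; rw [if_pos h]

theorem xpmR_val2 {d δ : ℕ} (p q ε : ℝ) {n : ℕ} (h1 : d/2 - δ ≤ n) (h2 : n < d/2) :
    xpmR d δ p q ε n = p := by
  unfold xpmR; rw [if_neg (by omega), if_pos h2]

theorem xpmR_val3 {d δ : ℕ} (p q ε : ℝ) {n : ℕ} (h1 : d/2 ≤ n) (h2 : n < d - δ) :
    xpmR d δ p q ε n = ε * q := by
  unfold xpmR; rw [if_neg (by omega), if_neg (by omega), if_pos h2]

theorem xpmR_val4 {d δ : ℕ} (p q ε : ℝ) {n : ℕ} (hδd : 4*δ ≤ d) (h1 : d - δ ≤ n) :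
    xpmR d δ p q ε n = p := by
  unfold xpmR; rw [if_neg (by omega), if_neg (by omega), if_neg (by omega)]

theorem maskSup_bound {d K : ℕ} (m : Fin K → Fin d → ℂ) (k : Fin K) (n : Fin d) :
    ‖m k n‖ ≤ maskSup m := by
  unfold maskSup
  calc ‖m k n‖ ≤ ⨆ n', ‖m k n'‖ :=
        le_ciSup (f := fun n' => ‖m k n'‖)
          (Set.Finite.bddAbove (Set.finite_range _)) n
    _ ≤ ⨆ k', ⨆ n', ‖m k' n'‖ :=
        le_ciSup (f := fun k' => ⨆ n', ‖m k' n'‖)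
          (Set.Finite.bddAbove (Set.finite_range _)) k

set_option maxHeartbeats 2000000 in
/-- Lower Lipschitz bound for recovery from the `Y`-measurements
with arbitrary locally supported masks. -/
theorem lower_lipschitz_Y : ∃ C : ℝ, 0 < C ∧
    ∀ (d δ a L K : ℕ) (m : Fin K → Fin d → ℂ) (p q CA : ℝ)
      (A : EuclideanSpace ℝ (Fin K × Fin L) → (Fin d → ℂ)),
      0 < d → Even d → 4 * δ ≤ d → 0 < a → 0 < L → d = a * L → 1 ≤ a → a < δ →
      (∀ k n, m k n ≠ 0 → (n : ℕ) < δ) →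
      0 < maskSup m →
      0 < p → p ≤ q →
      (∀ y y', d1 (A y) (A y') ≤ CA * ‖y - y'‖) →
      (∀ x ∈ Cpq d p q, phaseEquiv (A (Ymap L m a x)) x) →
      C * q * (d : ℝ) * Real.sqrt a /
          (p * Real.sqrt K * maskSup m ^ 2 * (δ : ℝ) ^ ((5 : ℝ) / 2)) ≤ CA := by
  classical
  refine ⟨1/16, by norm_num, ?_⟩
  intro d δ a L K m p q CA A hd heven hδd ha hL hdaL ha1 haδ hsupp hMs hp hpq hLip hrec
  have hq : 0 < q := lt_of_lt_of_le hp hpq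
  have hd2' : d % 2 = 0 := Nat.even_iff.mp heven
  have hδ1 : 1 ≤ δ := by omega
  have hK : 0 < K := by
    rcases Nat.eq_zero_or_pos K with h0 | h0
    · exfalso
      subst h0
      have : maskSup m = 0 := by
        unfold maskSup
        exact Real.iSup_of_isEmpty _
      rw [this] at hMs
      exact lt_irrefl 0 hMs
    · exact h0
  set M : ℝ := maskSup m with hMdef
  have hM0 : 0 ≤ M := le_of_lt hMs
  have hMle : ∀ k n, ‖m k n‖ ≤ M := fun k n => maskSup_bound m k n
  set x1 : Fin d → ℂ := xpm d δ p q 1 with hx1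
  set x2 : Fin d → ℂ := xpm d δ p q (-1) with hx2
  -- membership in C_{p,q}
  have hmem : ∀ ε : ℝ, |ε| = 1 → xpm d δ p q ε ∈ Cpq d p q := by
    intro ε hε
    rw [Cpq, Set.mem_setOf_eq]
    intro n
    rw [xpm_eq', Complex.norm_real, Real.norm_eq_abs]
    exact xpmR_between' hp hpq hε _
  -- the sums
  have hS : ∑ n ∈ Finset.range d, xpmR d δ p q 1 n * xpmR d δ p q 1 n
      = ((d:ℝ) - 2*δ)*q^2 + 2*(δ:ℝ)*p^2 := by
    rw [sum_piecewise' _ (d/2 - δ) (d/2) (d - δ) d (by omega) (by omega) (by omega)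
      (q*q) (p*p) ((1*q)*(1*q)) (p*p)
      (fun n hn => by rw [xpmR_val1 p q 1 hn])
      (fun n h1 h2 => by rw [xpmR_val2 p q 1 h1 h2])
      (fun n h1 h2 => by rw [xpmR_val3 p q 1 h1 h2])
      (fun n h1 _ => by rw [xpmR_val4 p q 1 hδd h1]),
      show d/2 - (d/2 - δ) = δ by omega, show d - δ - d/2 = d/2 - δ by omega,
      show d - (d - δ) = δ by omega]
    have hnat : 2*(d/2 - δ) + 2*δ = d := by omega
    have hcast : 2*(((d/2 - δ : ℕ)):ℝ) + 2*(δ:ℝ) = (d:ℝ) := by exact_mod_cast hnat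
    linear_combination (q^2) * hcast
  have hSm : ∑ n ∈ Finset.range d, xpmR d δ p q 1 n * xpmR d δ p q (-1) n
      = 2*(δ:ℝ)*p^2 := by
    rw [sum_piecewise' _ (d/2 - δ) (d/2) (d - δ) d (by omega) (by omega) (by omega)
      (q*q) (p*p) ((1*q)*((-1)*q)) (p*p)
      (fun n hn => by rw [xpmR_val1 p q 1 hn, xpmR_val1 p q (-1) hn])
      (fun n h1 h2 => by rw [xpmR_val2 p q 1 h1 h2, xpmR_val2 p q (-1) h1 h2])
      (fun n h1 h2 => by rw [xpmR_val3 p q 1 h1 h2, xpmR_val3 p q (-1) h1 h2])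
      (fun n h1 _ => by rw [xpmR_val4 p q 1 hδd h1, xpmR_val4 p q (-1) hδd h1]),
      show d/2 - (d/2 - δ) = δ by omega, show d - δ - d/2 = d/2 - δ by omega,
      show d - (d - δ) = δ by omega]
    ring
  set N : ℝ := ((d:ℝ) - 2*δ)*q^2 + 2*(δ:ℝ)*p^2 with hN
  have hin11 : innerC x1 x1 = ((N : ℝ) : ℂ) := by rw [hx1, innerC_xpm', hS]
  have hin12 : innerC x1 x2 = ((2*(δ:ℝ)*p^2 : ℝ) : ℂ) := by rw [hx1, hx2, innerC_xpm', hSm]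
  have hnormsum : ∑ i, Complex.normSq (x1 i) = N := by
    rw [← hS, ← Fin.sum_univ_eq_sum_range (fun n => xpmR d δ p q 1 n * xpmR d δ p q 1 n) d]
    exact Finset.sum_congr rfl fun i _ => by rw [hx1, xpm_eq', Complex.normSq_ofReal]
  have hdR : (4:ℝ)*(δ:ℝ) ≤ (d:ℝ) := by exact_mod_cast hδd
  have hδR : (1:ℝ) ≤ (δ:ℝ) := by exact_mod_cast hδ1
  have hdpos : (0:ℝ) < (d:ℝ) := by exact_mod_cast hd
  have hNpos : 0 < N := by nlinarith [mul_pos hq hq, mul_pos hp hp]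
  -- lower bound on d1
  have hd1low : q^2*(d:ℝ)/2 ≤ d1 x1 x2 := by
    have h := d1_lower' x1 x2 x1
    rw [hin11, hin12, hnormsum, Complex.normSq_ofReal, Complex.normSq_ofReal] at h
    have hXge : q^2*(d:ℝ)/2 ≤ ((d:ℝ) - 2*(δ:ℝ))*q^2 := by nlinarith [sq_nonneg q]
    have hc0 : (0:ℝ) ≤ 2*(δ:ℝ)*p^2 := by positivity
    have hX0 : (0:ℝ) ≤ ((d:ℝ) - 2*(δ:ℝ))*q^2 := by nlinarith [sq_nonneg q]
    have h1 : q^2*(d:ℝ)/2 * N ≤ ((d:ℝ) - 2*(δ:ℝ))*q^2 * N :=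
      mul_le_mul_of_nonneg_right hXge hNpos.le
    have hexpand : N*N - 2*(δ:ℝ)*p^2*(2*(δ:ℝ)*p^2) - ((d:ℝ) - 2*(δ:ℝ))*q^2 * N
        = ((d:ℝ) - 2*(δ:ℝ))*q^2 * (2*(δ:ℝ)*p^2) := by rw [hN]; ring
    have h2 : ((d:ℝ) - 2*(δ:ℝ))*q^2 * N ≤ N*N - 2*(δ:ℝ)*p^2 * (2*(δ:ℝ)*p^2) := by
      linarith [mul_nonneg hX0 hc0, hexpand]
    have key : q^2*(d:ℝ)/2 * N ≤ d1 x1 x2 * N := h1.trans (h2.trans h)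
    exact le_of_mul_le_mul_right key hNpos
  -- phase invariance
  obtain ⟨θ1, hθ1⟩ := hrec x1 (hmem 1 (by norm_num))
  obtain ⟨θ2, hθ2⟩ := hrec x2 (hmem (-1) (by norm_num))
  have hexp : ∀ (θ:ℝ) (z w : ℂ),
      (Complex.exp (θ*Complex.I) * z) * star (Complex.exp (θ*Complex.I) * w) = z * star w := by
    intro θ z w
    have he : (Complex.exp ((θ:ℂ)*Complex.I)) * star (Complex.exp ((θ:ℂ)*Complex.I)) = 1 := by
      rw [Complex.star_def, ← Complex.exp_conj, map_mul, Complex.conj_ofReal, Complex.conj_I,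
        ← Complex.exp_add, show (θ:ℂ)*Complex.I + (θ:ℂ)*(-Complex.I) = 0 by ring,
        Complex.exp_zero]
    calc (Complex.exp (θ*Complex.I) * z) * star (Complex.exp (θ*Complex.I) * w)
        = (Complex.exp (θ*Complex.I) * star (Complex.exp (θ*Complex.I))) * (z * star w) := by
          rw [star_mul']; ring
      _ = z * star w := by rw [he, one_mul]
  have hphase : d1 (A (Ymap L m a x1)) (A (Ymap L m a x2)) = d1 x1 x2 := by
    apply d1_congr'
    rw [hθ1, hθ2]
    unfold outerDiff
    ext i j
    simp only [Matrix.of_apply]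
    rw [hexp θ1 (x1 i) (x1 j), hexp θ2 (x2 i) (x2 j)]
  -- norm bound
  set E : ℝ := 4*p*q*(δ:ℝ)^2*M^2 with hE
  have hE0 : 0 ≤ E := by
    rw [hE]
    exact mul_nonneg (mul_nonneg (mul_nonneg (by linarith) hq.le) (sq_nonneg _)) (sq_nonneg _)
  set P : Fin L → Prop := fun ℓ2 =>
    (d/2 - δ < tval d (((ℓ2 : ℕ)+1)*a) ∧ tval d (((ℓ2 : ℕ)+1)*a) < d/2) ∨
    (d - 2*δ < tval d (((ℓ2 : ℕ)+1)*a) ∧ tval d (((ℓ2 : ℕ)+1)*a) < d - δ) with hP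
  have hcount : ((Finset.univ.filter P).card : ℝ) ≤ 4*(δ:ℝ)/(a:ℝ) := by
    have := count_bound hd2' hδd ha hL hdaL haδ
    exact_mod_cast this
  have hterm : ∀ kl : Fin K × Fin L,
      ‖(Ymap L m a x1 - Ymap L m a x2) kl‖^2 ≤ (if P kl.2 then E^2 else 0) := by
    intro kl
    have hb := entry_bound (aa := a) hd hd2' hδd m hsupp M hMle hp hpq kl.1 kl.2
    have happ : (Ymap L m a x1 - Ymap L m a x2) kl
        = Ymap L m a x1 (kl.1, kl.2) - Ymap L m a x2 (kl.1, kl.2) := rfl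
    rw [happ, Real.norm_eq_abs]
    by_cases hPk : P kl.2
    · rw [if_pos hPk]
      rw [hP] at hPk
      rw [if_pos hPk] at hb
      exact pow_le_pow_left₀ (abs_nonneg _) hb 2
    · rw [if_neg hPk]
      rw [hP] at hPk
      rw [if_neg hPk] at hb
      have : |Ymap L m a x1 (kl.1, kl.2) - Ymap L m a x2 (kl.1, kl.2)| = 0 :=
        le_antisymm hb (abs_nonneg _)
      rw [this]
      norm_num
  have hnormΔ : ‖Ymap L m a x1 - Ymap L m a x2‖ ≤ Real.sqrt ((K:ℝ) * (4*(δ:ℝ)/(a:ℝ))) * E := by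
    rw [EuclideanSpace.norm_eq]
    have hsum : ∑ kl : Fin K × Fin L, ‖(Ymap L m a x1 - Ymap L m a x2) kl‖^2
        ≤ (K:ℝ) * (4*(δ:ℝ)/(a:ℝ)) * E^2 := by
      calc ∑ kl : Fin K × Fin L, ‖(Ymap L m a x1 - Ymap L m a x2) kl‖^2
          ≤ ∑ kl : Fin K × Fin L, (if P kl.2 then E^2 else 0) :=
            Finset.sum_le_sum (fun kl _ => hterm kl)
        _ = ∑ _k : Fin K, ∑ ℓ2 : Fin L, (if P ℓ2 then E^2 else 0) := Fintype.sum_prod_type _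
        _ = (K:ℝ) * ∑ ℓ2 : Fin L, (if P ℓ2 then E^2 else 0) := by
            rw [Finset.sum_const, Finset.card_univ, Fintype.card_fin, nsmul_eq_mul]
        _ = (K:ℝ) * (((Finset.univ.filter P).card : ℝ) * E^2) := by
            rw [Finset.sum_ite, Finset.sum_const_zero, add_zero, Finset.sum_const,
              nsmul_eq_mul]
        _ ≤ (K:ℝ) * ((4*(δ:ℝ)/(a:ℝ)) * E^2) := by
            apply mul_le_mul_of_nonneg_left _ (Nat.cast_nonneg K)
            exact mul_le_mul_of_nonneg_right hcount (sq_nonneg E)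
        _ = (K:ℝ) * (4*(δ:ℝ)/(a:ℝ)) * E^2 := by ring
    calc Real.sqrt (∑ kl : Fin K × Fin L, ‖(Ymap L m a x1 - Ymap L m a x2) kl‖^2)
        ≤ Real.sqrt ((K:ℝ) * (4*(δ:ℝ)/(a:ℝ)) * E^2) := Real.sqrt_le_sqrt hsum
      _ = Real.sqrt ((K:ℝ) * (4*(δ:ℝ)/(a:ℝ))) * E := by
          rw [Real.sqrt_mul (by positivity) (E^2), Real.sqrt_sq hE0]
  -- combine
  have hlip := hLip (Ymap L m a x1) (Ymap L m a x2)
  rw [hphase] at hlip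
  have hqd : (0:ℝ) < q^2*(d:ℝ)/2 := by positivity
  have hCA0 : 0 ≤ CA := by
    by_contra hneg
    push_neg at hneg
    have h1 : CA * ‖Ymap L m a x1 - Ymap L m a x2‖ ≤ 0 :=
      mul_nonpos_iff.mpr (Or.inr ⟨hneg.le, norm_nonneg _⟩)
    linarith
  set W : ℝ := Real.sqrt ((K:ℝ) * (4*(δ:ℝ)/(a:ℝ))) * E with hW
  have hCAW : q^2*(d:ℝ)/2 ≤ CA * W :=
    le_trans (le_trans hd1low hlip) (mul_le_mul_of_nonneg_left hnormΔ hCA0)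
  -- final algebra
  have haR : (0:ℝ) < (a:ℝ) := by exact_mod_cast ha
  have hKR : (0:ℝ) < (K:ℝ) := by exact_mod_cast hK
  have hδRp : (0:ℝ) < (δ:ℝ) := by linarith
  have hsqa : (0:ℝ) < Real.sqrt a := Real.sqrt_pos.mpr haR
  have hsqK : (0:ℝ) < Real.sqrt K := Real.sqrt_pos.mpr hKR
  have hsqδ : (0:ℝ) < Real.sqrt δ := Real.sqrt_pos.mpr hδRp
  have hsq : Real.sqrt ((K:ℝ) * (4*(δ:ℝ)/(a:ℝ)))
      = 2*Real.sqrt K*Real.sqrt δ/Real.sqrt a := by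
    rw [show (K:ℝ)*(4*(δ:ℝ)/(a:ℝ)) = (2*Real.sqrt K*Real.sqrt δ/Real.sqrt a)^2 by
      rw [div_pow, mul_pow, mul_pow, Real.sq_sqrt hKR.le, Real.sq_sqrt hδRp.le,
        Real.sq_sqrt haR.le]
      field_simp
      ring]
    exact Real.sqrt_sq (by positivity)
  have hδ52 : (δ:ℝ)^((5:ℝ)/2) = (δ:ℝ)^2 * Real.sqrt δ := by
    rw [show ((5:ℝ)/2) = (2:ℝ) + 1/2 by norm_num, Real.rpow_add hδRp, Real.rpow_two,
      Real.sqrt_eq_rpow]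
  have hWpos : 0 < W := by
    rw [hW, hsq, hE]
    have hEpos : 0 < 4*p*q*(δ:ℝ)^2*M^2 := by positivity
    positivity
  set D : ℝ := p * Real.sqrt K * M^2 * (δ:ℝ)^((5:ℝ)/2) with hD
  have hDpos : 0 < D := by
    rw [hD, hδ52]
    positivity
  have hkey : (1/16*q*(d:ℝ)*Real.sqrt a) * W = (q^2*(d:ℝ)/2) * D := by
    rw [hW, hD, hsq, hE, hδ52]
    field_simp
    ring
  rw [div_le_iff₀ hDpos]
  have hfin : (1/16*q*(d:ℝ)*Real.sqrt a) * W ≤ (CA * W) * D := by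
    rw [hkey]
    exact mul_le_mul_of_nonneg_right hCAW hDpos.le
  have : 1/16*q*(d:ℝ)*Real.sqrt a ≤ CA * D := by
    have h2 : (1/16*q*(d:ℝ)*Real.sqrt a) * W ≤ (CA * D) * W := by
      calc (1/16*q*(d:ℝ)*Real.sqrt a) * W ≤ (CA * W) * D := hfin
        _ = (CA * D) * W := by ring
    exact le_of_mul_le_mul_right h2 hWpos
  linarith [this]
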